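/- For a prime p ≥ 3, the sequence (a_{p;0}(n))_{n≥0} has no prefix of the form vv with |v| ≥ p^2; consequently it is not purely morphic. -/

import Mathlib

/-- Number of occurrences of the word `w` as a factor of the word `x`. -/
def occCount (w x : List ℕ) : ℕ :=
  (List.range (x.length + 1)).countP (fun i => decide (w <+: x.drop i))

/-- Base-`m` expansion of `n`, most significant digit first, with `0` written as the digit `0`. -/
def baseExp (m n : ℕ) : List ℕ :=
  if n = 0 then [0] else (Nat.digits m n).reverse

/-- `e_{m;w}(n)`: number of occurrences of `w` in the base-`m` expansion of `n`. -/
def eCount (m : ℕ) (w : List ℕ) (n : ℕ) : ℕ := occCount w (baseExp m n)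

/-- `a_{m;w}(n) = e_{m;w}(n) mod m`. -/
def aSeq (m : ℕ) (w : List ℕ) (n : ℕ) : ℕ := eCount m w n % m

/-- The value `(w)_m` of the digit string `w` in base `m`. -/
def wordVal (m : ℕ) (w : List ℕ) : ℕ := w.foldl (fun acc d => acc * m + d) 0

/-- The finite word `v` is a prefix of the infinite sequence `s`. -/
def IsPrefixSeq (v : List ℕ) (s : ℕ → ℕ) : Prop := ∀ n < v.length, s n = v.getD n 0

/-- Length of the image under the morphism `φ` of the first `n` letters of `s`. -/
def morphPrefixLen (φ : ℕ → List ℕ) (s : ℕ → ℕ) (n : ℕ) : ℕ :=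
  (Finset.range n).sum fun j => (φ (s j)).length

/-- The infinite sequence `s` is a fixed point of the morphism `φ` (extended by
concatenation to infinite words). -/
def IsMorphFixedPoint (φ : ℕ → List ℕ) (s : ℕ → ℕ) : Prop :=
  ∀ n : ℕ, ∀ i < (φ (s n)).length,
    s (morphPrefixLen φ s n + i) = (φ (s n)).getD i 0

/-- The sequence `s` over the alphabet `{0,...,p-1}` is purely morphic: it is a fixed
point of a non-erasing morphism of `{0,...,p-1}*`, prolongable on the first letter. -/
def PurelyMorphic (p : ℕ) (s : ℕ → ℕ) : Prop :=
  ∃ φ : ℕ → List ℕ,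
    (∀ c < p, φ c ≠ [] ∧ ∀ d ∈ φ c, d < p) ∧
    2 ≤ (φ (s 0)).length ∧
    IsMorphFixedPoint φ s






def EZ (p n : ℕ) : ℕ := (Nat.digits p n).count 0

lemma occCount_zero (x : List ℕ) : occCount [0] x = x.count 0 := by
  induction x with
  | nil => decide
  | cons a t ih =>
    rw [occCount, List.length_cons, List.range_succ_eq_map, List.countP_cons,
      List.countP_map]
    have h1 : (List.range (t.length + 1)).countP
        ((fun i => decide ([0] <+: (a :: t).drop i)) ∘ Nat.succ) = occCount [0] t := by
      apply List.countP_congr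
      intro i _
      simp [Function.comp, List.drop_succ_cons]
    rw [h1, List.count_cons, ih]
    have h2 : ([0] <+: a :: t) ↔ a = 0 := by
      constructor
      · intro h
        rw [List.cons_prefix_cons] at h
        exact h.1.symm
      · rintro rfl
        rw [List.cons_prefix_cons]
        exact ⟨rfl, List.nil_prefix⟩
    by_cases ha : a = 0 <;> simp [ha, h2, occCount]

lemma aSeq_eq (p n : ℕ) (hp : 1 < p) : aSeq p [0] n = (if n = 0 then 1 else EZ p n) % p := by
  rcases Nat.eq_zero_or_pos n with rfl | hn
  · have h0 : baseExp p 0 = [0] := rfl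
    have h : occCount [0] ([0]) = 1 := by decide
    rw [aSeq, eCount, h0, h, if_pos rfl]
  · rw [aSeq, eCount, baseExp, if_neg hn.ne', occCount_zero, List.count_reverse,
      if_neg hn.ne']
    rfl

lemma EZ_zero (p : ℕ) : EZ p 0 = 0 := by simp [EZ]

lemma EZ_lt (p j : ℕ) (hp : 1 < p) (h1 : 1 ≤ j) (hj : j < p) : EZ p j = 0 := by
  rw [EZ, Nat.digits_def' hp h1, Nat.mod_eq_of_lt hj, Nat.div_eq_of_lt hj]
  simp [List.count_singleton]
  omega

lemma EZ_step (p q j : ℕ) (hp : 1 < p) (hq : 1 ≤ q) (hj : j < p) :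
    EZ p (p * q + j) = EZ p q + if j = 0 then 1 else 0 := by
  have hpos : 0 < p * q + j := by positivity
  rw [EZ, Nat.digits_def' hp hpos, Nat.mul_add_mod, Nat.mod_eq_of_lt hj,
    Nat.mul_add_div (by omega), Nat.div_eq_of_lt hj, List.count_cons]
  rw [EZ, add_zero]
  by_cases h : j = 0 <;> simp [h]

lemma EZ_mul (p q : ℕ) (hp : 1 < p) (hq : 1 ≤ q) : EZ p (p * q) = EZ p q + 1 := by
  have h := EZ_step p q 0 hp hq (by omega)
  simpa using h

lemma a_small (p j : ℕ) (hp : 1 < p) (h1 : 1 ≤ j) (hj : j < p) : aSeq p [0] j = 0 := by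
  rw [aSeq_eq p j hp, if_neg (by omega), EZ_lt p j hp h1 hj, Nat.zero_mod]

lemma a_mul (p q j : ℕ) (hp : 1 < p) (hq : 1 ≤ q) (hj : j < p) :
    aSeq p [0] (p * q + j) = (EZ p q + if j = 0 then 1 else 0) % p := by
  have hne : p * q + j ≠ 0 := by positivity
  rw [aSeq_eq p _ hp, if_neg hne, EZ_step p q j hp hq hj]

lemma a_mul0 (p q : ℕ) (hp : 1 < p) (hq : 1 ≤ q) :
    aSeq p [0] (p * q) = (EZ p q + 1) % p := by
  have h := a_mul p q 0 hp hq (by omega)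
  simpa using h

lemma aux_contra (p y : ℕ) (hp3 : 3 ≤ p) (h1 : (y + 1) % p = 0)
    (h2 : y % p = 0 ∨ y % p = 1) : False := by
  have hd1 : p ∣ y + 1 := Nat.dvd_of_mod_eq_zero h1
  rcases h2 with h2 | h2
  · have hd2 : p ∣ y := Nat.dvd_of_mod_eq_zero h2
    have h3 : p ∣ 1 := by
      have := Nat.dvd_sub hd1 hd2
      simpa using this
    have := Nat.le_of_dvd one_pos h3
    omega
  · have hy : y = p * (y / p) + 1 := by
      conv_lhs => rw [← Nat.div_add_mod y p]
      rw [h2]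
    have hy2 : y + 1 = p * (y / p) + 2 := by omega
    have hd2 : p ∣ 2 := (Nat.dvd_add_right (dvd_mul_right p (y / p))).mp (hy2 ▸ hd1)
    have := Nat.le_of_dvd (by omega) hd2
    omega

lemma noSquare (p : ℕ) (hp3 : 3 ≤ p) (L : ℕ) (hL : p ^ 2 ≤ L)
    (H : ∀ n < L, aSeq p [0] n = aSeq p [0] (n + L)) : False := by
  have hp1 : 1 < p := by omega
  have hpp : p * p = p ^ 2 := (sq p).symm
  obtain ⟨Λ, d, hLd, hdp⟩ : ∃ Λ d, L = p * Λ + d ∧ d < p :=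
    ⟨L / p, L % p, by rw [Nat.div_add_mod], Nat.mod_lt _ (by omega)⟩
  have hΛp : p ≤ Λ := by
    by_contra hc
    push_neg at hc
    have : p * Λ + d < p * p := by
      calc p * Λ + d < p * Λ + p := by omega
      _ = p * (Λ + 1) := by ring
      _ ≤ p * p := Nat.mul_le_mul_left p (by omega)
    omega
  rcases Nat.eq_zero_or_pos d with rfl | hd1
  · -- d = 0, L = p * Λ
    rw [add_zero] at hLd
    have hg : ∀ q < Λ, EZ p q % p = EZ p (q + Λ) % p := by
      intro q hq
      have hlt : p * q + 1 < L := by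
        have : p * (q + 1) ≤ p * Λ := Nat.mul_le_mul_left p (by omega)
        have h2 : p * (q + 1) = p * q + p := by ring
        omega
      have h := H (p * q + 1) hlt
      have hrhs : p * q + 1 + L = p * (q + Λ) + 1 := by rw [hLd]; ring
      rw [hrhs, a_mul p (q + Λ) 1 hp1 (by omega) hp1, if_neg one_ne_zero, add_zero] at h
      rcases Nat.eq_zero_or_pos q with rfl | hq1
      · rw [mul_zero, zero_add, a_small p 1 hp1 le_rfl hp1] at h
        rw [EZ_zero, Nat.zero_mod]
        exact h
      · rw [a_mul p q 1 hp1 hq1 hp1, if_neg one_ne_zero, add_zero] at h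
        exact h
    by_cases hpΛ : p ∣ Λ
    · obtain ⟨Λ', rfl⟩ := hpΛ
      have hΛ'1 : 1 ≤ Λ' := by
        rcases Nat.eq_zero_or_pos Λ' with rfl | h
        · simp at hΛp; omega
        · exact h
      have hΛ3 : 3 ≤ p * Λ' := by omega
      have h0 := hg 0 (by omega)
      have h1 := hg 1 (by omega)
      rw [EZ_zero, Nat.zero_mod, zero_add, EZ_mul p Λ' hp1 hΛ'1] at h0
      rw [EZ_lt p 1 hp1 le_rfl hp1, Nat.zero_mod, add_comm 1 (p * Λ'),
        EZ_step p Λ' 1 hp1 hΛ'1 hp1, if_neg one_ne_zero, add_zero] at h1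
      exact aux_contra p (EZ p Λ') hp3 h0.symm (Or.inl h1.symm)
    · obtain ⟨Q, d', hΛQ, hd'p⟩ : ∃ Q d', Λ = p * Q + d' ∧ d' < p :=
        ⟨Λ / p, Λ % p, by rw [Nat.div_add_mod], Nat.mod_lt _ (by omega)⟩
      have hd'1 : 1 ≤ d' := by
        rcases Nat.eq_zero_or_pos d' with rfl | h
        · exact absurd ⟨Q, by omega⟩ hpΛ
        · exact h
      have hQ1 : 1 ≤ Q := by
        rcases Nat.eq_zero_or_pos Q with rfl | h
        · simp at hΛQ; omega
        · exact h
      have hpQ : p ≤ p * Q := Nat.le_mul_of_pos_right p hQ1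
      have e1 : p * (Q + 1) = p * Q + p := by ring
      have h₁ := hg (p - d') (by omega)
      have e2 : p - d' + Λ = p * (Q + 1) := by omega
      rw [EZ_lt p (p - d') hp1 (by omega) (by omega), Nat.zero_mod, e2,
        EZ_mul p (Q + 1) hp1 (by omega)] at h₁
      rcases Nat.lt_or_ge d' 2 with hd'2 | hd'2
      · -- d' = 1
        have hd'e : d' = 1 := by omega
        have h₂ := hg p (by omega)
        have e3 : p + Λ = p * (Q + 1) + 1 := by omega
        have hEZp : EZ p p = 1 := by
          have h5 := EZ_mul p 1 hp1 le_rfl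
          rw [mul_one] at h5
          rw [h5, EZ_lt p 1 hp1 le_rfl hp1]
        rw [e3, EZ_step p (Q + 1) 1 hp1 (by omega) hp1, if_neg one_ne_zero,
          add_zero, hEZp, Nat.mod_eq_of_lt (by omega)] at h₂
        exact aux_contra p (EZ p (Q + 1)) hp3 h₁.symm (Or.inr h₂.symm)
      · -- d' ≥ 2
        have h₂ := hg (p - d' + 1) (by omega)
        have e3 : p - d' + 1 + Λ = p * (Q + 1) + 1 := by omega
        rw [EZ_lt p (p - d' + 1) hp1 (by omega) (by omega), Nat.zero_mod, e3,
          EZ_step p (Q + 1) 1 hp1 (by omega) hp1, if_neg one_ne_zero, add_zero] at h₂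
        exact aux_contra p (EZ p (Q + 1)) hp3 h₁.symm (Or.inl h₂.symm)
  · -- d ≥ 1
    have hpL : p < L := by
      have : p < p * p := by nlinarith
      omega
    have hΛ1 : 1 ≤ Λ + 1 := by omega
    have e1 : p * (Λ + 1) = p * Λ + p := by ring
    have h₁ := H (p - d) (by omega)
    have e2 : p - d + L = p * (Λ + 1) := by omega
    rw [a_small p (p - d) hp1 (by omega) (by omega), e2,
      a_mul0 p (Λ + 1) hp1 hΛ1] at h₁
    rcases Nat.lt_or_ge d 2 with hd2 | hd2
    · -- d = 1
      have h₂ := H p (by omega)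
      have e3 : p + L = p * (Λ + 1) + 1 := by omega
      have hap : aSeq p [0] p = 1 := by
        have h5 := a_mul0 p 1 hp1 le_rfl
        rw [mul_one] at h5
        rw [h5, EZ_lt p 1 hp1 le_rfl hp1]
        exact Nat.mod_eq_of_lt (by omega)
      rw [e3, a_mul p (Λ + 1) 1 hp1 hΛ1 hp1, if_neg one_ne_zero, add_zero, hap] at h₂
      exact aux_contra p (EZ p (Λ + 1)) hp3 h₁.symm (Or.inr h₂.symm)
    · -- d ≥ 2
      have h₂ := H (p - d + 1) (by omega)
      have e3 : p - d + 1 + L = p * (Λ + 1) + 1 := by omega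
      rw [a_small p (p - d + 1) hp1 (by omega) (by omega), e3,
        a_mul p (Λ + 1) 1 hp1 hΛ1 hp1, if_neg one_ne_zero, add_zero] at h₂
      exact aux_contra p (EZ p (Λ + 1)) hp3 h₁.symm (Or.inl h₂.symm)





lemma s0 (p : ℕ) (hp3 : 3 ≤ p) : aSeq p [0] 0 = 1 := by
  rw [aSeq_eq p 0 (by omega), if_pos rfl, Nat.mod_eq_of_lt (by omega)]

section Morph
variable {φ : ℕ → List ℕ} {s : ℕ → ℕ}

lemma morphPrefixLen_eq (φ : ℕ → List ℕ) (s : ℕ → ℕ) (n : ℕ) :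
    morphPrefixLen φ s n = ((List.range n).flatMap (fun j => φ (s j))).length := by
  induction n with
  | zero => simp [morphPrefixLen]
  | succ n ih =>
    rw [morphPrefixLen, Finset.sum_range_succ, List.range_succ, List.flatMap_append,
      List.length_append, ← morphPrefixLen, ih]
    simp

lemma prefix_range (hfix : IsMorphFixedPoint φ s) (n : ℕ) :
    IsPrefixSeq ((List.range n).flatMap (fun j => φ (s j))) s := by
  induction n with
  | zero => intro i hi; simp at hi
  | succ n ih =>
    have hsplit : (List.range (n + 1)).flatMap (fun j => φ (s j))
        = ((List.range n).flatMap (fun j => φ (s j))) ++ φ (s n) := by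
      rw [List.range_succ, List.flatMap_append]
      simp
    intro i hi
    rw [hsplit] at hi ⊢
    rw [List.length_append] at hi
    rcases Nat.lt_or_ge i ((List.range n).flatMap (fun j => φ (s j))).length with h | h
    · rw [List.getD_append _ _ _ _ h]
      exact ih i h
    · rw [List.getD_append_right _ _ _ _ h]
      have h2 := hfix n (i - ((List.range n).flatMap (fun j => φ (s j))).length) (by omega)
      rw [morphPrefixLen_eq] at h2
      rwa [Nat.add_sub_cancel' h] at h2

lemma isPrefixSeq_map (v : List ℕ) (hv : IsPrefixSeq v s) :
    v = (List.range v.length).map s := by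
  apply List.ext_getElem (by simp)
  intro i h1 h2
  rw [List.getElem_map, List.getElem_range]
  rw [← List.getD_eq_getElem v 0 h1]
  exact (hv i h1).symm

lemma prefix_image (hfix : IsMorphFixedPoint φ s) (v : List ℕ) (hv : IsPrefixSeq v s) :
    IsPrefixSeq (v.flatMap φ) s := by
  have h1 : v.flatMap φ = (List.range v.length).flatMap (fun j => φ (s j)) := by
    conv_lhs => rw [isPrefixSeq_map v hv]
    rw [List.flatMap_map]
  rw [h1]
  exact prefix_range hfix _

lemma prefix_mono (v w : List ℕ) (hvw : v <+: w) (hw : IsPrefixSeq w s) :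
    IsPrefixSeq v s := by
  obtain ⟨t, rfl⟩ := hvw
  intro n hn
  rw [hw n (by rw [List.length_append]; omega), List.getD_append _ _ _ _ hn]

end Morph

lemma flatMap_flatten_replicate (φ : ℕ → List ℕ) (k : ℕ) (v : List ℕ) :
    (List.flatten (List.replicate k v)).flatMap φ
      = List.flatten (List.replicate k (v.flatMap φ)) := by
  induction k with
  | zero => simp
  | succ k ih => simp [List.replicate_succ, List.flatMap_append, ih]

lemma length_flatten_replicate (k : ℕ) (v : List ℕ) :
    (List.flatten (List.replicate k v)).length = k * v.length := by
  induction k with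
  | zero => simp
  | succ k ih =>
    rw [List.replicate_succ, List.flatten_cons, List.length_append, ih]
    ring

lemma getD_flatten_replicate (v : List ℕ) (hv : 0 < v.length) (k : ℕ) :
    ∀ i, i < k * v.length →
      (List.flatten (List.replicate k v)).getD i 0 = v.getD (i % v.length) 0 := by
  induction k with
  | zero => intro i hi; omega
  | succ k ih =>
    intro i hi
    rw [List.replicate_succ, List.flatten_cons]
    rcases Nat.lt_or_ge i v.length with h | h
    · rw [List.getD_append _ _ _ _ h, Nat.mod_eq_of_lt h]
    · have e : (k + 1) * v.length = k * v.length + v.length := by ring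
      rw [List.getD_append_right _ _ _ _ h, ih (i - v.length) (by omega)]
      have e2 : i - v.length + v.length = i := by omega
      congr 1
      conv_rhs => rw [← e2]
      rw [Nat.add_mod_right]

def uBlock (p : ℕ) : List ℕ := (List.range p).map (fun i => if i = 0 then 1 else 0)

lemma uBlock_len (p : ℕ) : (uBlock p).length = p := by simp [uBlock]

lemma uBlock_getD (p r : ℕ) (hr : r < p) : (uBlock p).getD r 0 = if r = 0 then 1 else 0 := by
  rw [uBlock, List.getD_eq_getElem _ _ (by simpa [uBlock] using hr), List.getElem_map,
    List.getElem_range]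

lemma base_prefix (p : ℕ) (hp3 : 3 ≤ p) :
    IsPrefixSeq (List.flatten (List.replicate p (uBlock p))) (aSeq p [0]) := by
  intro i hi
  rw [length_flatten_replicate, uBlock_len] at hi
  rw [getD_flatten_replicate _ (by rw [uBlock_len]; omega) p i (by rw [uBlock_len]; exact hi),
    uBlock_len, uBlock_getD p (i % p) (Nat.mod_lt _ (by omega))]
  obtain ⟨q, r, hqr, hrp⟩ : ∃ q r, i = p * q + r ∧ r < p :=
    ⟨i / p, i % p, (Nat.div_add_mod i p).symm, Nat.mod_lt _ (by omega)⟩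
  have hmod : i % p = r := by rw [hqr, Nat.mul_add_mod, Nat.mod_eq_of_lt hrp]
  rw [hmod, hqr]
  rcases Nat.eq_zero_or_pos q with rfl | hq1
  · rw [mul_zero, zero_add]
    rcases Nat.eq_zero_or_pos r with rfl | hr1
    · rw [if_pos rfl]
      exact s0 p hp3
    · rw [if_neg (by omega)]
      exact a_small p r (by omega) hr1 hrp
  · have hqp : q < p := by nlinarith
    rw [a_mul p q r (by omega) hq1 hrp, EZ_lt p q (by omega) hq1 hqp, zero_add]
    rcases Nat.eq_zero_or_pos r with rfl | hr1
    · have h9 : (1:ℕ) % p = 1 := Nat.mod_eq_of_lt (by omega)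
      simpa using h9
    · simp [if_neg (by omega : ¬ r = 0)]

lemma letters_lt (p : ℕ) (hp : 0 < p) (v : List ℕ) (hv : IsPrefixSeq v (aSeq p [0])) :
    ∀ d ∈ v, d < p := by
  intro d hd
  obtain ⟨i, hi, rfl⟩ := List.mem_iff_getElem.mp hd
  rw [← List.getD_eq_getElem v 0 hi, ← hv i hi]
  exact Nat.mod_lt _ hp

lemma flatMap_len_ge (φ : ℕ → List ℕ) (l : List ℕ) (h : ∀ d ∈ l, φ d ≠ []) :
    l.length ≤ (l.flatMap φ).length := by
  induction l with
  | nil => simp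
  | cons a t ih =>
    rw [List.flatMap_cons, List.length_append, List.length_cons]
    have h1 : 1 ≤ (φ a).length := List.length_pos_iff.mpr (h a List.mem_cons_self)
    have h2 := ih (fun d hd => h d (List.mem_cons_of_mem a hd))
    omega

theorem stmt16 (p : ℕ) (hp : p.Prime) (hp3 : 3 ≤ p) :
    (∀ v : List ℕ, p ^ 2 ≤ v.length → ¬ IsPrefixSeq (v ++ v) (aSeq p [0])) ∧
    ¬ PurelyMorphic p (aSeq p [0]) := by
  have hp1 : 1 < p := by omega
  have hpart1 : ∀ v : List ℕ, p ^ 2 ≤ v.length → ¬ IsPrefixSeq (v ++ v) (aSeq p [0]) := by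
    intro v hv H
    apply noSquare p hp3 v.length hv
    intro n hn
    have h1 := H n (by rw [List.length_append]; omega)
    have h2 := H (n + v.length) (by rw [List.length_append]; omega)
    have e : n + v.length - v.length = n := by omega
    rw [List.getD_append _ _ _ _ hn] at h1
    rw [List.getD_append_right _ _ _ _ (by omega), e] at h2
    rw [h1, h2]
  refine ⟨hpart1, ?_⟩
  rintro ⟨φ, hφ, hφ2, hfix⟩
  rw [s0 p hp3] at hφ2
  set V : ℕ → List ℕ := fun k => (fun l => l.flatMap φ)^[k] (uBlock p) with hVdef
  have hV0 : V 0 = uBlock p := rfl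
  have hVs : ∀ k, V (k + 1) = (V k).flatMap φ := fun k => Function.iterate_succ_apply' _ _ _
  have key : ∀ k, IsPrefixSeq (List.flatten (List.replicate p (V k))) (aSeq p [0]) ∧
      p + k ≤ (V k).length := by
    intro k
    induction k with
    | zero =>
      refine ⟨base_prefix p hp3, ?_⟩
      rw [hV0, uBlock_len]
      omega
    | succ k ih =>
      obtain ⟨hpre, hlen⟩ := ih
      have hpre1 : IsPrefixSeq (V k) (aSeq p [0]) := by
        apply prefix_mono _ _ _ hpre
        have hsp : List.flatten (List.replicate p (V k))
            = V k ++ List.flatten (List.replicate (p - 1) (V k)) := by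
          conv_lhs => rw [show p = (p - 1) + 1 by omega]
          rw [List.replicate_succ, List.flatten_cons]
        rw [hsp]
        exact List.prefix_append _ _
      constructor
      · rw [hVs, ← flatMap_flatten_replicate]
        exact prefix_image hfix _ hpre
      · have hne : V k ≠ [] := by
          intro h
          rw [h] at hlen
          simp at hlen
          omega
        obtain ⟨a, t, hat⟩ := List.exists_cons_of_ne_nil hne
        have ha : a = 1 := by
          have h := hpre1 0 (by rw [hat]; exact Nat.succ_pos _)
          rw [hat, List.getD_cons_zero, s0 p hp3] at h
          exact h.symm
        have htlt : ∀ d ∈ t, φ d ≠ [] := by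
          intro d hd
          have hdp : d < p := by
            apply letters_lt p (by omega) (V k) hpre1
            rw [hat]
            exact List.mem_cons_of_mem a hd
          exact (hφ d hdp).1
        have h3 := flatMap_len_ge φ t htlt
        rw [hVs, hat, List.flatMap_cons, List.length_append]
        rw [hat, List.length_cons] at hlen
        rw [ha] at *
        omega
  obtain ⟨hpre, hlen⟩ := key (p ^ 2)
  set W := V (p ^ 2) with hW
  apply hpart1 W (by omega)
  apply prefix_mono _ _ _ hpre
  have hsp : List.flatten (List.replicate p W)
      = (W ++ W) ++ List.flatten (List.replicate (p - 2) W) := by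
    conv_lhs => rw [show p = (p - 2) + 1 + 1 by omega]
    rw [List.replicate_succ, List.replicate_succ, List.flatten_cons, List.flatten_cons,
      ← List.append_assoc]
  rw [hsp]
  exact List.prefix_append _ _
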